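/- arXiv:2012.11118 — 2 statements merged into one kernel-verified Lean document; each statement's English description precedes it below -/
import Mathlib

section
/- For every 3×3 real symmetric matrix σ, with m = tr(σ)/3, p = (1/6)·Σᵢⱼ((σ−mI)ᵢⱼ)² and q = (1/2)·det(σ−mI), one has p³ ≥ q². (This is the nonnegativity of the quantity p³ − q² under the square root in Cardano's trigonometric angle θ = (1/3)·arctan(√(p³−q²)/q), and it holds because all eigenvalues of σ are real.) -/
open Matrix

lemma trace_eq_sum_eigs' {A : Matrix (Fin 3) (Fin 3) ℝ} (hA : A.IsHermitian) :
    A.trace = ∑ i, hA.eigenvalues i := by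
  conv_lhs => rw [hA.spectral_theorem, Unitary.conjStarAlgAut_apply]
  rw [Matrix.trace_mul_cycle, Unitary.coe_star_mul_self, Matrix.one_mul, Matrix.trace_diagonal]
  simp

lemma trace_sq_eq_sum_eigs' {A : Matrix (Fin 3) (Fin 3) ℝ} (hA : A.IsHermitian) :
    (A * A).trace = ∑ i, (hA.eigenvalues i)^2 := by
  set U : Matrix (Fin 3) (Fin 3) ℝ := (hA.eigenvectorUnitary : Matrix (Fin 3) (Fin 3) ℝ) with hU
  set D : Matrix (Fin 3) (Fin 3) ℝ := diagonal (RCLike.ofReal ∘ hA.eigenvalues) with hD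
  have h1 : star U * U = 1 := Unitary.coe_star_mul_self hA.eigenvectorUnitary
  have key : A * A = U * (D * D) * star U := by
    conv_lhs => rw [hA.spectral_theorem, Unitary.conjStarAlgAut_apply]
    rw [show U * D * star U * (U * D * star U) = U * (D * (star U * U) * D) * star U by
      simp only [Matrix.mul_assoc]]
    rw [h1, Matrix.mul_one]
  rw [key, Matrix.trace_mul_cycle, ← Matrix.mul_assoc, h1, Matrix.one_mul, hD,
    Matrix.diagonal_mul_diagonal, Matrix.trace_diagonal]
  simp [sq]

/-- for a 3×3 real symmetric matrix, with m = tr(σ)/3,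
p = (1/6)Σ((σ−mI)ᵢⱼ)², q = (1/2)det(σ−mI), one has p³ ≥ q². -/
theorem p_cubed_ge_q_squared (σ : Matrix (Fin 3) (Fin 3) ℝ) (hσ : σ.IsSymm)
    (m p q : ℝ)
    (hm : m = σ.trace / 3)
    (hp : p = (1/6) * ∑ i, ∑ j, ((σ - m • (1 : Matrix (Fin 3) (Fin 3) ℝ)) i j)^2)
    (hq : q = (1/2) * (σ - m • (1 : Matrix (Fin 3) (Fin 3) ℝ)).det) :
    p^3 ≥ q^2 := by
  set A := σ - m • (1 : Matrix (Fin 3) (Fin 3) ℝ) with hA_def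
  have hAsymm : A.IsSymm := by
    unfold Matrix.IsSymm at *
    rw [hA_def, Matrix.transpose_sub, hσ, Matrix.transpose_smul, Matrix.transpose_one]
  have hA : A.IsHermitian := by
    rw [Matrix.IsHermitian, Matrix.conjTranspose_eq_transpose_of_trivial]; exact hAsymm
  set x := hA.eigenvalues 0 with hx
  set y := hA.eigenvalues 1 with hy
  set z := hA.eigenvalues 2 with hz
  have htr0 : A.trace = 0 := by
    show (σ - m • (1 : Matrix (Fin 3) (Fin 3) ℝ)).trace = 0
    rw [Matrix.trace_sub, Matrix.trace_smul, Matrix.trace_one, hm]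
    simp
  have htr : x + y + z = 0 := by
    have h := trace_eq_sum_eigs' hA
    rw [Fin.sum_univ_three, htr0] at h
    linarith [h.symm]
  have hdet : A.det = x * y * z := by
    have := hA.det_eq_prod_eigenvalues
    simpa [Fin.prod_univ_three] using this
  have hsum : ∑ i, ∑ j, (A i j)^2 = x^2 + y^2 + z^2 := by
    have h2 := trace_sq_eq_sum_eigs' hA
    rw [Fin.sum_univ_three] at h2
    rw [← h2, Matrix.trace]
    simp only [Matrix.diag, Matrix.mul_apply]
    rw [Finset.sum_comm]
    refine Finset.sum_congr rfl fun i _ => Finset.sum_congr rfl fun j _ => ?_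
    rw [sq, hAsymm.apply i j]
  have h6p : 6 * p = x^2 + y^2 + z^2 := by rw [hp, ← hsum]; ring
  have h2q : 2 * q = x * y * z := by rw [hq, hdet]; ring
  have hp' : p = (x^2 + y^2 + z^2) / 6 := by linarith
  have hq' : q = x * y * z / 2 := by linarith
  have hz' : z = -(x + y) := by linarith
  have key : 108 * (p^3 - q^2) = ((x - y) * (y - z) * (z - x))^2 := by
    rw [hp', hq', hz']; ring
  linarith [sq_nonneg ((x - y) * (y - z) * (z - x)), key]
end

section
/- Let σ be a 3×3 real symmetric matrix with m = tr(σ)/3, p = (1/6)·Σᵢⱼ((σ−mI)ᵢⱼ)², q = (1/2)·det(σ−mI). Assume p > 0 and let θ ∈ [0, π/3] satisfy cos(3θ) = q·p^{−3/2}. Then the eigenvalues of σ, counted with multiplicity, are λ₁ = m + 2√p·cos(θ), λ₂ = m − √p·(cos(θ) + √3·sin(θ)), λ₃ = m − √p·(cos(θ) − √3·sin(θ)); equivalently det(σ − λ·I) = (λ₁−λ)(λ₂−λ)(λ₃−λ) for all real λ. Moreover λ₂ = m − 2√p·cos(θ − π/3) and λ₃ = m − 2√p·cos(θ + π/3). 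-/
open Matrix Real

/-- Cardano's trigonometric expressions for the eigenvalues of a
3×3 real symmetric matrix. -/
theorem cardano_eigenvalues (σ : Matrix (Fin 3) (Fin 3) ℝ) (hσ : σ.IsSymm)
    (m p q θ : ℝ)
    (hm : m = σ.trace / 3)
    (hp : p = (1/6) * ∑ i, ∑ j, ((σ - m • (1 : Matrix (Fin 3) (Fin 3) ℝ)) i j)^2)
    (hq : q = (1/2) * (σ - m • (1 : Matrix (Fin 3) (Fin 3) ℝ)).det)
    (hppos : 0 < p)
    (hθ : θ ∈ Set.Icc 0 (Real.pi / 3))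
    (hcos : Real.cos (3*θ) = q * p ^ (-(3:ℝ)/2)) :
    (∀ l : ℝ, (σ - l • (1 : Matrix (Fin 3) (Fin 3) ℝ)).det =
        ((m + 2 * Real.sqrt p * Real.cos θ) - l) *
        ((m - Real.sqrt p * (Real.cos θ + Real.sqrt 3 * Real.sin θ)) - l) *
        ((m - Real.sqrt p * (Real.cos θ - Real.sqrt 3 * Real.sin θ)) - l)) ∧
    m - Real.sqrt p * (Real.cos θ + Real.sqrt 3 * Real.sin θ)
        = m - 2 * Real.sqrt p * Real.cos (θ - Real.pi / 3) ∧
    m - Real.sqrt p * (Real.cos θ - Real.sqrt 3 * Real.sin θ)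
        = m - 2 * Real.sqrt p * Real.cos (θ + Real.pi / 3) := by
  set s := Real.sqrt p with hs
  set C := Real.cos θ with hC
  set S := Real.sin θ with hS
  have hs2 : s ^ 2 = p := Real.sq_sqrt hppos.le
  have hspos : 0 < s := Real.sqrt_pos.mpr hppos
  have hS2 : S ^ 2 = 1 - C ^ 2 := by
    have := Real.sin_sq_add_cos_sq θ; linarith
  -- p ^ (3/2) = s ^ 3
  have hp32 : p ^ ((3:ℝ)/2) = s ^ 3 := by
    rw [hs, Real.sqrt_eq_rpow, ← Real.rpow_natCast (p ^ ((1:ℝ)/2)) 3,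
      ← Real.rpow_mul hppos.le]
    norm_num
  have hqeq : q = (4 * C ^ 3 - 3 * C) * s ^ 3 := by
    have h1 : Real.cos (3 * θ) * p ^ ((3:ℝ)/2) = q := by
      rw [hcos, mul_assoc, ← Real.rpow_add hppos]
      norm_num
    rw [← h1, hp32, Real.cos_three_mul]
  have h10 : σ 1 0 = σ 0 1 := hσ.apply 0 1
  have h20 : σ 2 0 = σ 0 2 := hσ.apply 0 2
  have h21 : σ 2 1 = σ 1 2 := hσ.apply 1 2
  have hm' : σ 0 0 + σ 1 1 + σ 2 2 = 3 * m := by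
    rw [hm, Matrix.trace_fin_three]; ring
  have hp' : 6 * p = (σ 0 0 - m)^2 + (σ 1 1 - m)^2 + (σ 2 2 - m)^2
      + 2 * (σ 0 1)^2 + 2 * (σ 0 2)^2 + 2 * (σ 1 2)^2 := by
    rw [hp]
    simp [Fin.sum_univ_three, Matrix.sub_apply, Matrix.smul_apply, Matrix.one_apply,
      h10, h20, h21]
    ring
  have hq' : 2 * q = (σ 0 0 - m) * (σ 1 1 - m) * (σ 2 2 - m)
      + 2 * σ 0 1 * σ 0 2 * σ 1 2
      - (σ 0 0 - m) * (σ 1 2)^2 - (σ 1 1 - m) * (σ 0 2)^2 - (σ 2 2 - m) * (σ 0 1)^2 := by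
    rw [hq, Matrix.det_fin_three]
    simp [Matrix.sub_apply, Matrix.smul_apply, Matrix.one_apply, h10, h20, h21]
    ring
  refine ⟨fun l => ?_, ?_, ?_⟩
  · have hdet : (σ - l • (1 : Matrix (Fin 3) (Fin 3) ℝ)).det
        = -(l - m)^3 + 3 * p * (l - m) + 2 * q := by
      rw [Matrix.det_fin_three]
      simp [Matrix.one_fin_three, Matrix.sub_apply, Matrix.smul_apply, smul_eq_mul, Matrix.vecHead, Matrix.vecTail,
        h10, h20, h21]
      linear_combination ((l-m)^2 - ((l-m)/2)*(σ 0 0 + σ 1 1 + σ 2 2 - 3*m)) * hm'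
        - ((l - m)/2) * hp' - hq'
    have h3 : Real.sqrt 3 ^ 2 = 3 := Real.sq_sqrt (by norm_num)
    rw [hdet, hqeq, ← hs2]
    linear_combination (6*s^3*C - 3*s^2*(l-m)) * hS2 + (S^2*(2*s^3*C - s^2*(l-m))) * h3
  · rw [Real.cos_sub, Real.cos_pi_div_three, Real.sin_pi_div_three]
    ring
  · rw [Real.cos_add, Real.cos_pi_div_three, Real.sin_pi_div_three]
    ring
end
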